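/- In the free group F₂ = ⟨x, y⟩, let M = ⟨x⁴, y⟩ and M' = ⟨xy, yx⟩, H₁ = ⟨x⁴y²⟩, H₂ = ⟨yx⁴y²⟩, H₁' = ⟨xy⟩, H₂' = ⟨yx⟩. Then the element y⁻²x⁻³yx⁴y² is a nontrivial element of ⟨H₁, H₁'⟩ ∩ ⟨H₂, H₂'⟩, while H₁ ∩ H₂ and H₁' ∩ H₂' are both trivial; hence ⟨H₁ ∩ H₂, H₁' ∩ H₂'⟩ ≠ ⟨H₁, H₁'⟩ ∩ ⟨H₂, H₂'⟩. -/

import Mathlib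

/-- Exponent-sum of `x` (the generator `true`), as a homomorphism to `Multiplicative ℤ`. -/
private def cx : FreeGroup Bool →* Multiplicative ℤ :=
  FreeGroup.lift (fun b => if b then Multiplicative.ofAdd 1 else 1)

/-- Exponent-sum of `y` (the generator `false`), as a homomorphism to `Multiplicative ℤ`. -/
private def cy : FreeGroup Bool →* Multiplicative ℤ :=
  FreeGroup.lift (fun b => if b then 1 else Multiplicative.ofAdd 1)

/-- The rotation homomorphism `ℤ → D∞`. -/
private def ψ : Multiplicative ℤ →* DihedralGroup 0 :=
  MonoidHom.mk' (fun m => DihedralGroup.r (show ZMod 0 from m.toAdd)) (by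
    intro a b; exact DihedralGroup.r_mul_r _ _ |>.symm ▸ rfl)

private lemma r_zpow (i m : ℤ) :
    (DihedralGroup.r (show ZMod 0 from i)) ^ m = DihedralGroup.r (show ZMod 0 from m * i) := by
  rw [show DihedralGroup.r (show ZMod 0 from i) = ψ (Multiplicative.ofAdd i) from rfl,
    ← map_zpow, show Multiplicative.ofAdd i ^ m = Multiplicative.ofAdd (m * i) from by
      rw [← ofAdd_zsmul, smul_eq_mul]]
  rfl

/-- The homomorphism `F₂ → D∞` sending both generators to reflections. -/
private def φd : FreeGroup Bool →* DihedralGroup 0 :=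
  FreeGroup.lift (fun b => if b then DihedralGroup.sr 0 else DihedralGroup.sr 1)

/-- In `F₂ = ⟨x, y⟩` with `M = ⟨x⁴, y⟩`, `M' = ⟨xy, yx⟩`, `H₁ = ⟨x⁴y²⟩`,
`H₂ = ⟨yx⁴y²⟩`, `H₁' = ⟨xy⟩`, `H₂' = ⟨yx⟩`, the element `y⁻²x⁻³yx⁴y²` is a
nontrivial element of `⟨H₁, H₁'⟩ ∩ ⟨H₂, H₂'⟩`, while `H₁ ∩ H₂` and `H₁' ∩ H₂'`
are trivial; hence `⟨H₁ ∩ H₂, H₁' ∩ H₂'⟩ ≠ ⟨H₁, H₁'⟩ ∩ ⟨H₂, H₂'⟩`. -/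
theorem stmt8 :
    let x : FreeGroup Bool := FreeGroup.of true
    let y : FreeGroup Bool := FreeGroup.of false
    let H₁ : Subgroup (FreeGroup Bool) := Subgroup.closure {x ^ 4 * y ^ 2}
    let H₂ : Subgroup (FreeGroup Bool) := Subgroup.closure {y * x ^ 4 * y ^ 2}
    let H₁' : Subgroup (FreeGroup Bool) := Subgroup.closure {x * y}
    let H₂' : Subgroup (FreeGroup Bool) := Subgroup.closure {y * x}
    let g : FreeGroup Bool := y⁻¹ ^ 2 * x⁻¹ ^ 3 * y * x ^ 4 * y ^ 2
    g ≠ 1 ∧ g ∈ (H₁ ⊔ H₁') ⊓ (H₂ ⊔ H₂') ∧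
      H₁ ⊓ H₂ = ⊥ ∧ H₁' ⊓ H₂' = ⊥ ∧
      (H₁ ⊓ H₂) ⊔ (H₁' ⊓ H₂') ≠ (H₁ ⊔ H₁') ⊓ (H₂ ⊔ H₂') := by
  set x : FreeGroup Bool := FreeGroup.of true with hxdef
  set y : FreeGroup Bool := FreeGroup.of false with hydef
  set H₁ : Subgroup (FreeGroup Bool) := Subgroup.closure {x ^ 4 * y ^ 2}
  set H₂ : Subgroup (FreeGroup Bool) := Subgroup.closure {y * x ^ 4 * y ^ 2}
  set H₁' : Subgroup (FreeGroup Bool) := Subgroup.closure {x * y}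
  set H₂' : Subgroup (FreeGroup Bool) := Subgroup.closure {y * x}
  set g : FreeGroup Bool := y⁻¹ ^ 2 * x⁻¹ ^ 3 * y * x ^ 4 * y ^ 2 with hgdef
  have hg1 : g ≠ 1 := by
    intro h
    have := congrArg (Multiplicative.toAdd ∘ cx) h
    simp [hgdef, hxdef, hydef, cx, toAdd_zpow, toAdd_pow, smul_eq_mul] at this
  have hmem1 : x ^ 4 * y ^ 2 ∈ H₁ := Subgroup.subset_closure rfl
  have hmem2 : y * x ^ 4 * y ^ 2 ∈ H₂ := Subgroup.subset_closure rfl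
  have hmem1' : x * y ∈ H₁' := Subgroup.subset_closure rfl
  have hmem2' : y * x ∈ H₂' := Subgroup.subset_closure rfl
  have hgmem : g ∈ (H₁ ⊔ H₁') ⊓ (H₂ ⊔ H₂') := by
    rw [Subgroup.mem_inf]
    constructor
    · have e1 : g = (x ^ 4 * y ^ 2)⁻¹ * (x * y) * (x ^ 4 * y ^ 2) := by
        rw [hgdef]; group
      rw [e1]
      exact mul_mem (mul_mem (inv_mem (Subgroup.mem_sup_left hmem1))
        (Subgroup.mem_sup_right hmem1')) (Subgroup.mem_sup_left hmem1)
    · have e2 : g = (y * x ^ 4 * y ^ 2)⁻¹ * (y * x) * (y * x ^ 4 * y ^ 2) := by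
        rw [hgdef]; group
      rw [e2]
      exact mul_mem (mul_mem (inv_mem (Subgroup.mem_sup_left hmem2))
        (Subgroup.mem_sup_right hmem2')) (Subgroup.mem_sup_left hmem2)
  have hb1 : H₁ ⊓ H₂ = ⊥ := by
    rw [eq_bot_iff]
    intro z hz
    rw [Subgroup.mem_inf] at hz
    obtain ⟨m, hm⟩ := Subgroup.mem_closure_singleton.mp hz.1
    obtain ⟨n, hn⟩ := Subgroup.mem_closure_singleton.mp hz.2
    have hmn := hm.trans hn.symm
    have a1 := congrArg (Multiplicative.toAdd ∘ cx) hmn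
    have a2 := congrArg (Multiplicative.toAdd ∘ cy) hmn
    simp [cx, cy, hxdef, hydef, toAdd_zpow, toAdd_pow, smul_eq_mul] at a1 a2
    have hm0 : m = 0 := by omega
    rw [Subgroup.mem_bot, ← hm, hm0, zpow_zero]
  have hb2 : H₁' ⊓ H₂' = ⊥ := by
    rw [eq_bot_iff]
    intro z hz
    rw [Subgroup.mem_inf] at hz
    obtain ⟨m, hm⟩ := Subgroup.mem_closure_singleton.mp hz.1
    obtain ⟨n, hn⟩ := Subgroup.mem_closure_singleton.mp hz.2
    have hmn := hm.trans hn.symm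
    have a1 := congrArg (Multiplicative.toAdd ∘ cx) hmn
    simp [cx, hxdef, hydef, toAdd_zpow, toAdd_pow, smul_eq_mul] at a1
    have a2 := congrArg φd hmn
    simp only [map_zpow, map_mul, φd, FreeGroup.lift_apply_of, hxdef, hydef] at a2
    norm_num at a2
    have a3 : (m * 1 : ℤ) = n * -1 := by
      have h' : (m : ℤ) = -(n : ℤ) := a2
      omega
    have hm0 : m = 0 := by omega
    rw [Subgroup.mem_bot, ← hm, hm0, zpow_zero]
  refine ⟨hg1, hgmem, hb1, hb2, ?_⟩
  rw [hb1, hb2, sup_bot_eq]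
  intro h
  exact hg1 (Subgroup.mem_bot.mp (h ▸ hgmem))
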